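/- arXiv:2310.05246 — 2 statements merged into one kernel-verified Lean document; each statement's English description precedes it below -/
import Mathlib

section
/- For any single-qubit density operator ρ (positive semidefinite 2×2 matrix with trace 1), the quantity (1/2)·(tr(|+₀⟩⟨+₀| ρ) + tr(|+₂⟩⟨+₂| ρ)) is at most cos²(π/8), where |+θ⟩ = (|0⟩ + e^{iθπ/4}|1⟩)/√2. -/
open scoped Matrix ComplexOrder

noncomputable def plusVec (θ : ℕ) : Fin 2 → ℂ :=
  fun i => if i = 0 then 1 / Real.sqrt 2
    else Complex.exp (Complex.I * θ * Real.pi / 4) / Real.sqrt 2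

noncomputable def projOf (v : Fin 2 → ℂ) : Matrix (Fin 2) (Fin 2) ℂ :=
  fun i j => v i * (starRingEnd ℂ) (v j)

/-- For any single-qubit density operator ρ,
`(1/2)(tr(|+₀⟩⟨+₀|ρ) + tr(|+₂⟩⟨+₂|ρ)) ≤ cos²(π/8)`. -/
theorem stmt0 (ρ : Matrix (Fin 2) (Fin 2) ℂ) (hρ : ρ.PosSemidef)
    (htr : ρ.trace = 1) :
    (1 / 2 : ℝ) * ((Matrix.trace (projOf (plusVec 0) * ρ)).re
      + (Matrix.trace (projOf (plusVec 2) * ρ)).re)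
      ≤ Real.cos (Real.pi / 8) ^ 2 := by
  have hs2 : (Real.sqrt 2 : ℝ) ^ 2 = 2 := Real.sq_sqrt (by norm_num)
  have hss : Real.sqrt 2 * Real.sqrt 2 = 2 := Real.mul_self_sqrt (by norm_num)
  have hs2pos : (0:ℝ) < Real.sqrt 2 := Real.sqrt_pos.mpr (by norm_num)
  have he2 : Complex.exp (Complex.I * 2 * Real.pi / 4) = Complex.I := by
    have h : Complex.I * 2 * Real.pi / 4 = ((Real.pi/2 : ℝ) : ℂ) * Complex.I := by
      push_cast; ring
    rw [h, Complex.exp_mul_I, ← Complex.ofReal_cos, ← Complex.ofReal_sin]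
    simp [Real.cos_pi_div_two, Real.sin_pi_div_two]
  have hv0 : plusVec 0 = ![(1:ℂ)/Real.sqrt 2, 1/Real.sqrt 2] := by
    funext i; fin_cases i <;> simp [plusVec]
  have hv2 : plusVec 2 = ![(1:ℂ)/Real.sqrt 2, Complex.I/Real.sqrt 2] := by
    funext i; fin_cases i <;> simp [plusVec, he2]
  set x : Fin 2 → ℂ := ![1, -(1 + Complex.I) / Real.sqrt 2] with hx
  have hQ := (Complex.le_def.mp (hρ.dotProduct_mulVec_nonneg x)).1
  have htre : (ρ 0 0).re + (ρ 1 1).re = 1 := by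
    have := congrArg Complex.re htr
    simpa [Matrix.trace_fin_two] using this
  have hcos : Real.cos (Real.pi / 8) ^ 2 = (2 + Real.sqrt 2) / 4 := by
    rw [Real.cos_pi_div_eight, div_pow, Real.sq_sqrt (by positivity)]
    norm_num
  rw [hcos]
  simp only [Matrix.trace_fin_two, Matrix.mul_apply, Fin.sum_univ_two, projOf, hv0, hv2,
    dotProduct, Matrix.mulVec, hx, Matrix.cons_val_zero,
    Matrix.cons_val_one, Matrix.head_cons, Pi.star_apply, star_one, star_div₀, star_neg,
    star_add, Complex.star_def, Complex.conj_I, map_one, Complex.conj_ofReal,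
    map_div₀] at hQ ⊢
  simp only [Complex.add_re, Complex.mul_re, Complex.mul_im, Complex.div_re, Complex.div_im,
    Complex.one_re, Complex.one_im, Complex.I_re, Complex.I_im, Complex.ofReal_re,
    Complex.ofReal_im, Complex.zero_re, Complex.zero_im, Complex.neg_re, Complex.neg_im,
    Complex.add_im, Complex.sub_re, Complex.sub_im, Complex.normSq_ofReal, hss,
    map_neg, map_add, map_one, Complex.conj_I] at hQ ⊢
  ring_nf at hQ ⊢
  simp only [hs2] at hQ ⊢
  nlinarith [mul_nonneg hs2pos.le hQ, htre, hss, hQ]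
end

section
/- Let u, v be unit vectors in a finite-dimensional complex inner product space, and let Pᵤ, Pᵥ be the orthogonal projections onto their spans. Then for any density operator ρ, tr((Pᵤ + Pᵥ)ρ) ≤ 1 + |⟨u,v⟩|. -/
open scoped Matrix ComplexOrder InnerProductSpace

/-- Rank-one projection `|u⟩⟨v|` as a matrix. -/
noncomputable def outerE {n : ℕ} (u v : EuclideanSpace ℂ (Fin n)) :
    Matrix (Fin n) (Fin n) ℂ :=
  fun i j => u i * (starRingEnd ℂ) (v j)

-- aux 1: key scalar inequality
lemma key_ineq {n : ℕ} (u v : EuclideanSpace ℂ (Fin n)) (hu : ‖u‖ = 1) (hv : ‖v‖ = 1)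
    (x : EuclideanSpace ℂ (Fin n)) :
    ‖(⟪u, x⟫_ℂ : ℂ)‖ ^ 2 + ‖(⟪v, x⟫_ℂ : ℂ)‖ ^ 2
      ≤ (1 + ‖(⟪u, v⟫_ℂ : ℂ)‖) * ‖x‖ ^ 2 := by
  set a : ℂ := ⟪u, x⟫_ℂ with ha
  set b : ℂ := ⟪v, x⟫_ℂ with hb
  set c : ℝ := ‖(⟪u, v⟫_ℂ : ℂ)‖ with hc
  set z : EuclideanSpace ℂ (Fin n) := a • u + b • v with hz
  set t : ℝ := ‖a‖ ^ 2 + ‖b‖ ^ 2 with ht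
  have hzx : ⟪z, x⟫_ℂ = (t : ℂ) := by
    rw [hz, inner_add_left, inner_smul_left, inner_smul_left, ← ha, ← hb,
      RCLike.conj_mul, RCLike.conj_mul, ht]
    norm_cast
  have hCS : t ≤ ‖z‖ * ‖x‖ := by
    have := norm_inner_le_norm (𝕜 := ℂ) z x
    rw [hzx] at this
    simpa [abs_of_nonneg (by positivity : (0:ℝ) ≤ t)] using this
  have hznorm : ‖z‖ ^ 2 ≤ t + 2 * ‖a‖ * ‖b‖ * c := by
    have h1 : ‖z‖ ^ 2 = ‖a • u‖ ^ 2 + 2 * RCLike.re ⟪a • u, b • v⟫_ℂ + ‖b • v‖ ^ 2 :=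
      norm_add_sq _ _
    have h2 : RCLike.re ⟪a • u, (b • v : EuclideanSpace ℂ (Fin n))⟫_ℂ ≤ ‖a‖ * ‖b‖ * c := by
      calc RCLike.re ⟪a • u, (b • v : EuclideanSpace ℂ (Fin n))⟫_ℂ
          ≤ ‖(⟪a • u, (b • v : EuclideanSpace ℂ (Fin n))⟫_ℂ : ℂ)‖ := RCLike.re_le_norm _
        _ = ‖a‖ * ‖b‖ * c := by
            rw [inner_smul_left, inner_smul_right, hc, norm_mul, norm_mul]
            simp [mul_assoc]
    have h3 : ‖a • u‖ = ‖a‖ := by rw [norm_smul, hu, mul_one]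
    have h4 : ‖b • v‖ = ‖b‖ := by rw [norm_smul, hv, mul_one]
    rw [h1, h3, h4]; nlinarith
  have h2ab : 2 * ‖a‖ * ‖b‖ ≤ t := by nlinarith [sq_nonneg (‖a‖ - ‖b‖)]
  have hc0 : 0 ≤ c := norm_nonneg _
  have hz2 : ‖z‖ ^ 2 ≤ t * (1 + c) := by nlinarith
  rcases eq_or_lt_of_le (by positivity : (0:ℝ) ≤ t) with h | h
  · nlinarith
  · nlinarith [sq_nonneg (‖z‖ * ‖x‖), norm_nonneg z, norm_nonneg x, sq_nonneg ‖x‖]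

-- aux 2: trace of product of PSD matrices has nonneg real part
lemma trace_mul_psd_re_nonneg {n : ℕ} {M ρ : Matrix (Fin n) (Fin n) ℂ}
    (hM : M.PosSemidef) (hρ : ρ.PosSemidef) : 0 ≤ ((M * ρ).trace).re := by
  obtain ⟨S, hSpsd, hSS⟩ : ∃ S : Matrix (Fin n) (Fin n) ℂ, S.PosSemidef ∧ S * S = ρ := by
    open scoped MatrixOrder in
    exact ⟨CFC.sqrt ρ, Matrix.nonneg_iff_posSemidef.mp (CFC.sqrt_nonneg ρ), CFC.sqrt_mul_sqrt_self ρ hρ.nonneg⟩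
  have h1 : (M * ρ).trace = (S * M * S).trace := by
    conv_lhs => rw [← hSS]
    rw [← Matrix.mul_assoc, Matrix.trace_mul_cycle]
  have hN : (S * M * S).PosSemidef := by
    have h := hM.conjTranspose_mul_mul_same S
    rwa [hSpsd.1.eq] at h
  rw [h1, Matrix.trace, Complex.re_sum]
  apply Finset.sum_nonneg
  intro i _
  have h2 := hN.re_dotProduct_nonneg (Pi.single i 1)
  simpa [dotProduct, Matrix.mulVec, Pi.single_apply, Finset.mul_sum,
    mul_comm, Matrix.diag] using h2

-- aux 3: quadratic form of outerE
lemma outerE_quad {n : ℕ} (u : EuclideanSpace ℂ (Fin n)) (x : EuclideanSpace ℂ (Fin n)) :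
    star (x : Fin n → ℂ) ⬝ᵥ ((outerE u u) *ᵥ (x : Fin n → ℂ))
      = ((‖(⟪u, x⟫_ℂ : ℂ)‖ : ℝ) : ℂ) ^ 2 := by
  have hinner : (⟪u, x⟫_ℂ : ℂ) = ∑ j, (starRingEnd ℂ) (u j) * x j := by
    simp [PiLp.inner_apply, mul_comm]
  have key : star (x : Fin n → ℂ) ⬝ᵥ ((outerE u u) *ᵥ (x : Fin n → ℂ))
      = (starRingEnd ℂ) (⟪u, x⟫_ℂ : ℂ) * (⟪u, x⟫_ℂ : ℂ) := by
    rw [hinner]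
    simp only [dotProduct, Matrix.mulVec, outerE, Pi.star_apply, RCLike.star_def,
      map_sum, map_mul, RingHomCompTriple.comp_apply, RingHom.id_apply,
      starRingEnd_self_apply, Finset.sum_mul]
    apply Finset.sum_congr rfl
    intro i _
    rw [Finset.mul_sum, Finset.mul_sum]
    apply Finset.sum_congr rfl
    intro j _
    ring
  rw [key, RCLike.conj_mul]
  norm_cast

-- aux 4: the gap matrix is PSD
lemma gap_psd {n : ℕ} (u v : EuclideanSpace ℂ (Fin n)) (hu : ‖u‖ = 1) (hv : ‖v‖ = 1) :
    (((1 + ‖(⟪u, v⟫_ℂ : ℂ)‖ : ℝ) : ℂ) • (1 : Matrix (Fin n) (Fin n) ℂ)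
      - outerE u u - outerE v v).PosSemidef := by
  set c : ℝ := ‖(⟪u, v⟫_ℂ : ℂ)‖ with hc
  refine Matrix.PosSemidef.of_dotProduct_mulVec_nonneg ?_ ?_
  · unfold Matrix.IsHermitian
    ext i j
    simp only [Matrix.conjTranspose_apply, Matrix.sub_apply, Matrix.smul_apply,
      Matrix.one_apply, outerE, star_sub, star_mul', star_star, smul_eq_mul, map_sub, map_mul,
      RingHomCompTriple.comp_apply, RingHom.id_apply, starRingEnd_self_apply, map_mul]
    by_cases h : i = j <;> simp [h, eq_comm, mul_comm]
  · intro x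
    set x' : EuclideanSpace ℂ (Fin n) := WithLp.toLp 2 x with hx'
    have hx : star x ⬝ᵥ ((((1 + c : ℝ) : ℂ) • (1 : Matrix (Fin n) (Fin n) ℂ)
        - outerE u u - outerE v v) *ᵥ x)
        = (((1 + c) * ‖x'‖ ^ 2 - ‖(⟪u, x'⟫_ℂ : ℂ)‖ ^ 2 - ‖(⟪v, x'⟫_ℂ : ℂ)‖ ^ 2 : ℝ) : ℂ) := by
      rw [Matrix.sub_mulVec, Matrix.sub_mulVec, dotProduct_sub, dotProduct_sub,
        show star x ⬝ᵥ (outerE u u *ᵥ x) = _ from outerE_quad u x',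
        show star x ⬝ᵥ (outerE v v *ᵥ x) = _ from outerE_quad v x', Matrix.smul_mulVec, Matrix.one_mulVec,
        dotProduct_smul]
      have hxx : star x ⬝ᵥ x = ((‖x'‖ ^ 2 : ℝ) : ℂ) := by
        have h1 : (⟪x', x'⟫_ℂ : ℂ) = star x ⬝ᵥ x := by
          rw [hx', PiLp.inner_apply]
          simp only [dotProduct, RCLike.inner_apply, Pi.star_apply, RCLike.star_def, mul_comm]
        rw [← h1, inner_self_eq_norm_sq_to_K]
        norm_cast
      rw [hxx]
      simp only [smul_eq_mul]
      push_cast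
      ring
    rw [hx, Complex.zero_le_real]
    have h2 := key_ineq u v hu hv x'
    rw [← hc] at h2
    linarith

/-- For unit vectors u, v with rank-one projections Pᵤ, Pᵥ and any density operator ρ,
`tr((Pᵤ + Pᵥ)ρ) ≤ 1 + |⟨u,v⟩|`. -/
theorem stmt1 (n : ℕ) (u v : EuclideanSpace ℂ (Fin n))
    (hu : ‖u‖ = 1) (hv : ‖v‖ = 1)
    (ρ : Matrix (Fin n) (Fin n) ℂ) (hρ : ρ.PosSemidef) (htr : ρ.trace = 1) :
    (Matrix.trace ((outerE u u + outerE v v) * ρ)).re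
      ≤ 1 + ‖(⟪u, v⟫_ℂ : ℂ)‖ := by
  set c : ℝ := ‖(⟪u, v⟫_ℂ : ℂ)‖ with hc
  set M : Matrix (Fin n) (Fin n) ℂ :=
    ((1 + c : ℝ) : ℂ) • (1 : Matrix (Fin n) (Fin n) ℂ) - outerE u u - outerE v v with hM
  have hMpsd := gap_psd u v hu hv
  have htr2 : 0 ≤ ((M * ρ).trace).re := trace_mul_psd_re_nonneg hMpsd hρ
  have hsplit : ((outerE u u + outerE v v) * ρ).trace
      = ((1 + c : ℝ) : ℂ) - (M * ρ).trace := by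
    have : M * ρ = ((1 + c : ℝ) : ℂ) • ρ - (outerE u u + outerE v v) * ρ := by
      rw [hM]
      rw [Matrix.sub_mul, Matrix.sub_mul, Matrix.add_mul, Matrix.smul_mul, Matrix.one_mul]
      abel
    rw [this, Matrix.trace_sub, Matrix.trace_smul, htr, smul_eq_mul, mul_one]
    ring
  rw [hsplit, Complex.sub_re, Complex.ofReal_re]
  linarith
end
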